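/- Fix integers n ≥ 0 and 0 ≤ k ≤ n, and define b_{j,k,n} := (-1)^j · C(k,j) / (n(n-1)⋯(n-j+1)) for 1 ≤ j ≤ k (where C(k,j) is the binomial coefficient, and the empty product for j = 0 gives b_{0,k,n} = 1). Then for complex numbers b_1, …, b_k, the formal power series e^x · (1 + b_1 x + b_2 x^2 + ⋯ + b_k x^k) is congruent modulo x^{n+1} to a polynomial of degree at most n − k (i.e. its coefficients of x^{n-k+1}, …, x^n all vanish) if and only if b_j = b_{j,k,n} for all 1 ≤ j ≤ k. -/

import Mathlib

open Finset fwdDiff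

-- key alternating choose identity over ℤ
lemma key_int (k n r : ℕ) (hkn : k ≤ n) (hrk : r < k) :
    ∑ j ∈ Finset.range (k+1), (-1:ℤ)^j * (k.choose j) * ((n-j).choose r) = 0 := by
  have h0 : (fwdDiff 1)^[k] (fun x : ℕ ↦ ((x.choose r : ℤ))) (n - k) = 0 := by
    obtain ⟨d, rfl⟩ : ∃ d, k = (d + 1) + r := ⟨k - r - 1, by omega⟩
    rw [Function.iterate_add_apply]
    have hr : (fwdDiff 1)^[r] (fun x : ℕ ↦ ((x.choose r : ℤ))) = fun _ ↦ (1:ℤ) := by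
      have := fwdDiff_iter_choose 0 r
      simpa using this
    rw [hr, Function.iterate_succ_apply, fwdDiff_const]
    exact congrFun (Function.iterate_fixed (fwdDiff_const 1 (0:ℤ)) d) _
  rw [fwdDiff_iter_eq_sum_shift] at h0
  rw [← Finset.sum_range_reflect]
  rw [← h0]
  refine Finset.sum_congr rfl fun i hi ↦ ?_
  have hik : i ≤ k := by simp only [Finset.mem_range] at hi; omega
  have h1 : k + 1 - 1 - i = k - i := by omega
  have h2 : n - (k - i) = n - k + i • (1:ℕ) := by simp [smul_eq_mul]; omega
  rw [h1, h2, Nat.choose_symm hik]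
  push_cast [zsmul_eq_mul]
  ring

lemma key_c (k n r : ℕ) (hkn : k ≤ n) (hrk : r < k) :
    ∑ j ∈ Finset.range (k+1), (-1:ℂ)^j * (k.choose j) * ((n-j).choose r) = 0 := by
  have h := key_int k n r hkn hrk
  have h2 : ((∑ j ∈ Finset.range (k+1), (-1:ℤ)^j * (k.choose j) * ((n-j).choose r) : ℤ) : ℂ) = 0 := by
    rw [h]; simp
  push_cast at h2
  exact h2

lemma coeff_formula (b : ℕ → ℂ) (k m : ℕ) :
    PowerSeries.coeff (R := ℂ) m (PowerSeries.exp ℂ *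
      ∑ j ∈ Finset.range (k + 1), PowerSeries.C (R := ℂ) (b j) * PowerSeries.X ^ j)
    = ∑ j ∈ Finset.range (k+1), if j ≤ m then b j / ((m-j).factorial : ℂ) else 0 := by
  rw [Finset.mul_sum, map_sum]
  refine Finset.sum_congr rfl fun j _ ↦ ?_
  rw [show PowerSeries.exp ℂ * (PowerSeries.C (R := ℂ) (b j) * PowerSeries.X ^ j)
      = PowerSeries.C (R := ℂ) (b j) * (PowerSeries.exp ℂ * PowerSeries.X ^ j) by ring]
  rw [PowerSeries.coeff_C_mul, PowerSeries.coeff_mul_X_pow', PowerSeries.coeff_exp]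
  split_ifs with h
  · rw [map_div₀, map_one, map_natCast, mul_one_div]
  · rw [mul_zero]

lemma bstar_sum (n k m : ℕ) (hk : k ≤ n) (hm1 : n - k < m) (hm2 : m ≤ n) :
    ∑ j ∈ Finset.range (k+1),
      (if j ≤ m then ((-1:ℂ)^j * (k.choose j : ℂ) / (n.descFactorial j : ℂ)) / ((m-j).factorial : ℂ) else 0)
    = 0 := by
  have hrk : n - m < k := by omega
  have hsum := key_c k n (n - m) hk hrk
  have hterm : ∀ j ∈ Finset.range (k+1),
      (if j ≤ m then ((-1:ℂ)^j * (k.choose j : ℂ) / (n.descFactorial j : ℂ)) / ((m-j).factorial : ℂ) else 0)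
      = ((n-m).factorial : ℂ) / (n.factorial : ℂ) * ((-1:ℂ)^j * (k.choose j : ℂ) * ((n-j).choose (n-m) : ℂ)) := by
    intro j hj
    rw [Finset.mem_range] at hj
    have hjk : j ≤ k := by omega
    split_ifs with hjm
    · -- j ≤ m
      have hnat : (n-j).choose (n-m) * (n-m).factorial * (m-j).factorial = (n-j).factorial := by
        have := Nat.choose_mul_factorial_mul_factorial (show n - m ≤ n - j by omega)
        rw [show n - j - (n - m) = m - j by omega] at this
        exact this
      have hnat2 : (n-j).factorial * n.descFactorial j = n.factorial :=
        Nat.factorial_mul_descFactorial (by omega)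
      have hD : (n.descFactorial j : ℂ) ≠ 0 := by
        have : 0 < n.descFactorial j := Nat.pos_of_ne_zero (by
          rw [Ne, Nat.descFactorial_eq_zero_iff_lt]; omega)
        exact_mod_cast this.ne'
      have hf1 : ((m-j).factorial : ℂ) ≠ 0 := by exact_mod_cast (Nat.factorial_pos _).ne'
      have hf2 : ((n:ℕ).factorial : ℂ) ≠ 0 := by exact_mod_cast (Nat.factorial_pos _).ne'
      have hcast : ((n-j).choose (n-m) : ℂ) * ((n-m).factorial : ℂ) * ((m-j).factorial : ℂ)
          * (n.descFactorial j : ℂ) = (n.factorial : ℂ) := by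
        exact_mod_cast congrArg (Nat.cast : ℕ → ℂ) (by rw [hnat, hnat2])
      field_simp
      linear_combination (-(k.choose j : ℂ)) * hcast
    · -- j > m : RHS zero since choose (n-j) (n-m) = 0
      have : (n-j).choose (n-m) = 0 := Nat.choose_eq_zero_of_lt (by omega)
      rw [this]
      simp
  rw [Finset.sum_congr rfl hterm, ← Finset.mul_sum, hsum, mul_zero]

lemma coeff_extract (c : ℕ → ℂ) : ∀ k : ℕ,
    (∑ j ∈ Finset.range (k+1), Polynomial.C (c j) * descPochhammer ℂ j) = 0 →
    ∀ j ≤ k, c j = 0 := by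
  intro k
  induction k with
  | zero =>
    intro h j hj
    interval_cases j
    have h0 : Polynomial.C (c 0) = 0 := by simpa using h
    exact_mod_cast (Polynomial.C_eq_zero).mp h0
  | succ k ih =>
    intro h j hj
    have hck : c (k+1) = 0 := by
      have := congrArg (fun p : Polynomial ℂ ↦ p.coeff (k+1)) h
      simp only [Polynomial.finset_sum_coeff, Polynomial.coeff_zero] at this
      rw [Finset.sum_range_succ] at this
      have hzero : ∀ i ∈ Finset.range (k+1),
          (Polynomial.C (c i) * descPochhammer ℂ i).coeff (k+1) = 0 := by
        intro i hi
        rw [Finset.mem_range] at hi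
        rw [Polynomial.coeff_C_mul, Polynomial.coeff_eq_zero_of_natDegree_lt, mul_zero]
        rw [descPochhammer_natDegree]; omega
      rw [Finset.sum_eq_zero hzero, zero_add, Polynomial.coeff_C_mul] at this
      have hmon : (descPochhammer ℂ (k+1)).coeff (k+1) = 1 := by
        have := (monic_descPochhammer ℂ (k+1)).coeff_natDegree
        rwa [descPochhammer_natDegree] at this
      rw [hmon, mul_one] at this
      exact this
    rcases Nat.lt_succ_iff_lt_or_eq.mp (Nat.lt_succ_of_le hj) with hlt | rfl
    · apply ih _ _ (by omega)
      rw [Finset.sum_range_succ, hck] at h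
      simpa using h
    · exact hck

lemma uniq (n k : ℕ) (hk : k ≤ n) (c : ℕ → ℂ) (hc0 : c 0 = 0)
    (h : ∀ m : ℕ, n - k < m → m ≤ n →
      ∑ j ∈ Finset.range (k+1), (if j ≤ m then c j / ((m-j).factorial : ℂ) else 0) = 0) :
    ∀ j, j ≤ k → c j = 0 := by
  set Q : Polynomial ℂ := ∑ j ∈ Finset.range (k+1), Polynomial.C (c j) * descPochhammer ℂ j
    with hQdef
  have hdeg : Q.natDegree ≤ k := by
    apply Polynomial.natDegree_sum_le_of_forall_le
    intro j hj
    refine le_trans (Polynomial.natDegree_C_mul_le _ _) ?_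
    rw [descPochhammer_natDegree]
    exact Finset.mem_range_succ_iff.mp hj
  have hevalQ : ∀ m : ℕ, Q.eval (m:ℂ) = ∑ j ∈ Finset.range (k+1), c j * (m.descFactorial j : ℂ) := by
    intro m
    rw [hQdef, Polynomial.eval_finset_sum]
    refine Finset.sum_congr rfl fun j _ ↦ ?_
    rw [Polynomial.eval_mul, Polynomial.eval_C, descPochhammer_eval_eq_descFactorial]
  have heval0 : Q.eval ((0:ℕ):ℂ) = 0 := by
    rw [hevalQ]
    refine Finset.sum_eq_zero fun j hj ↦ ?_
    match j with
    | 0 => simp [hc0]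
    | (j'+1) => simp [Nat.zero_descFactorial_succ]
  have hevalm : ∀ m : ℕ, n - k < m → m ≤ n → Q.eval (m:ℂ) = 0 := by
    intro m h1 h2
    rw [hevalQ]
    have hsum := h m h1 h2
    have : ∑ j ∈ Finset.range (k+1), c j * (m.descFactorial j : ℂ)
        = (m.factorial : ℂ) * ∑ j ∈ Finset.range (k+1),
            (if j ≤ m then c j / ((m-j).factorial : ℂ) else 0) := by
      rw [Finset.mul_sum]
      refine Finset.sum_congr rfl fun j _ ↦ ?_
      split_ifs with hjm
      · have hnat : (m-j).factorial * m.descFactorial j = m.factorial :=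
          Nat.factorial_mul_descFactorial hjm
        have hf : ((m-j).factorial : ℂ) ≠ 0 := by exact_mod_cast (Nat.factorial_pos _).ne'
        have hcast : ((m-j).factorial : ℂ) * (m.descFactorial j : ℂ) = (m.factorial : ℂ) := by
          exact_mod_cast congrArg (Nat.cast : ℕ → ℂ) hnat
        field_simp
        linear_combination c j * hcast
      · have : m.descFactorial j = 0 := Nat.descFactorial_eq_zero_iff_lt.mpr (by omega)
        simp [this]
    rw [this, hsum, mul_zero]
  have hQ0 : Q = 0 := by
    apply Polynomial.eq_zero_of_natDegree_lt_card_of_eval_eq_zero' Q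
      (insert (0:ℂ) ((Finset.Ioc (n-k) n).image (Nat.cast : ℕ → ℂ)))
    · intro x hx
      rcases Finset.mem_insert.mp hx with rfl | hx
      · simpa using heval0
      · obtain ⟨m, hm, rfl⟩ := Finset.mem_image.mp hx
        rw [Finset.mem_Ioc] at hm
        exact hevalm m hm.1 hm.2
    · have hnotmem : (0:ℂ) ∉ (Finset.Ioc (n-k) n).image (Nat.cast : ℕ → ℂ) := by
        intro hmem
        obtain ⟨m, hm, hm0⟩ := Finset.mem_image.mp hmem
        rw [Finset.mem_Ioc] at hm
        have : m = 0 := by exact_mod_cast hm0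
        omega
      rw [Finset.card_insert_of_notMem hnotmem,
        Finset.card_image_of_injective _ Nat.cast_injective, Nat.card_Ioc]
      omega
  exact fun j hj ↦ coeff_extract c k (hQdef ▸ hQ0) j hj

/-- `e^x (1 + b_1 x + ⋯ + b_k x^k)` is congruent mod `x^{n+1}` to a polynomial of degree
at most `n - k` iff `b_j = (-1)^j C(k,j) / (n(n-1)⋯(n-j+1))` for `1 ≤ j ≤ k`. -/
theorem exp_coefficients_characterization (n k : ℕ) (hk : k ≤ n)
    (b : ℕ → ℂ) (hb0 : b 0 = 1) :
    (∀ m : ℕ, n - k < m → m ≤ n →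
        PowerSeries.coeff (R := ℂ) m (PowerSeries.exp ℂ *
          ∑ j ∈ Finset.range (k + 1), PowerSeries.C (R := ℂ) (b j) * PowerSeries.X ^ j) = 0) ↔
      (∀ j : ℕ, 1 ≤ j → j ≤ k →
        b j = (-1 : ℂ) ^ j * (k.choose j : ℂ) / (n.descFactorial j : ℂ)) := by
  constructor
  · intro h j hj1 hjk
    set c : ℕ → ℂ := fun i ↦ b i - (-1:ℂ)^i * (k.choose i : ℂ) / (n.descFactorial i : ℂ) with hc
    have hc0 : c 0 = 0 := by simp [hc, hb0]
    have hcs : ∀ m : ℕ, n - k < m → m ≤ n →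
        ∑ j ∈ Finset.range (k+1), (if j ≤ m then c j / ((m-j).factorial : ℂ) else 0) = 0 := by
      intro m h1 h2
      have hA := h m h1 h2
      rw [coeff_formula] at hA
      have hB := bstar_sum n k m hk h1 h2
      have hsplit : ∀ i ∈ Finset.range (k+1),
          (if i ≤ m then c i / ((m-i).factorial : ℂ) else 0)
          = (if i ≤ m then b i / ((m-i).factorial : ℂ) else 0)
            - (if i ≤ m then ((-1:ℂ)^i * (k.choose i : ℂ) / (n.descFactorial i : ℂ))
                / ((m-i).factorial : ℂ) else 0) := by
        intro i _
        split_ifs with hi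
        · rw [hc]; ring
        · ring
      rw [Finset.sum_congr rfl hsplit, Finset.sum_sub_distrib, hA, hB, sub_zero]
    have := uniq n k hk c hc0 hcs j hjk
    rw [hc] at this
    have := sub_eq_zero.mp this
    exact this
  · intro h m h1 h2
    rw [coeff_formula]
    have hcongr : ∀ j ∈ Finset.range (k+1),
        (if j ≤ m then b j / ((m-j).factorial : ℂ) else 0)
        = (if j ≤ m then ((-1:ℂ)^j * (k.choose j : ℂ) / (n.descFactorial j : ℂ))
            / ((m-j).factorial : ℂ) else 0) := by
      intro j hj
      rw [Finset.mem_range] at hj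
      congr 1
      match j with
      | 0 => simp [hb0]
      | (j'+1) => rw [h (j'+1) (by omega) (by omega)]
    rw [Finset.sum_congr rfl hcongr]
    exact bstar_sum n k m hk h1 h2
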